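/- Let f be analytic on the open unit disk D = {z ∈ ℂ : |z| < 1} with |f(z)| < 1 for all z ∈ D, and write f(z) = ∑_{k=0}^∞ a_k z^k. Let p and λ be real numbers with 0 < p ≤ 1 and 0 < λ. Define R_{λ,p} = (−p − λ + √(λ² + 4pλ))/(2λ − p) if p ≠ 2λ, and R_{λ,p} = 1/3 if p = 2λ. Then for every z ∈ D with |z| = r ≤ R_{λ,p}, one has |f(z)|^p + λ ∑_{k=1}^∞ |a_k| r^k ≤ 1. -/

import Mathlib

open Metric Complex Set Finset

set_option maxHeartbeats 1000000

namespace BohrAux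

namespace Complex

noncomputable def abs : AbsoluteValue ℂ ℝ := NormedField.toAbsoluteValue ℂ

lemma norm_eq_abs (z : ℂ) : ‖z‖ = abs z := rfl

lemma abs_ofReal (r : ℝ) : abs (r : ℂ) = |r| := by
  rw [← norm_eq_abs]; simp

lemma abs_conj (z : ℂ) : abs ((starRingEnd ℂ) z) = abs z := by
  rw [← norm_eq_abs, ← norm_eq_abs]; simp

lemma sq_abs (z : ℂ) : abs z ^ 2 = _root_.Complex.normSq z := by
  rw [← norm_eq_abs]; exact _root_.Complex.sq_norm z

lemma mul_self_abs (z : ℂ) : abs z * abs z = _root_.Complex.normSq z := by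
  rw [← sq_abs, pow_two]

lemma abs_apply (z : ℂ) : abs z = Real.sqrt (_root_.Complex.normSq z) := by
  rw [← sq_abs, Real.sqrt_sq (AbsoluteValue.nonneg _ _)]

lemma abs_natCast (n : ℕ) : abs (n : ℂ) = n := by
  rw [← norm_eq_abs]; simp

lemma re_le_abs (z : ℂ) : z.re ≤ abs z := by
  rw [← norm_eq_abs]; exact _root_.Complex.re_le_norm z

end Complex

lemma summable_norm {c : ℕ → ℂ}
    (h : ∀ w ∈ Metric.ball (0:ℂ) 1, Summable fun m => c m * w ^ m)
    {r : ℝ} (hr0 : 0 ≤ r) (hr1 : r < 1) :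
    Summable fun m => Complex.abs (c m) * r ^ m := by
  obtain ⟨ρ, hrρ, hρ1⟩ : ∃ ρ, r < ρ ∧ ρ < 1 := ⟨(1 + r) / 2, by linarith, by linarith⟩
  have hρ0 : 0 < ρ := lt_of_le_of_lt hr0 hrρ
  have hmem : (ρ : ℂ) ∈ Metric.ball (0:ℂ) 1 := by
    simp [Complex.abs_ofReal, abs_of_pos hρ0, hρ1]
  have hsum := h _ hmem
  have htend : Filter.Tendsto (fun m => Complex.abs (c m) * ρ ^ m) Filter.atTop (nhds 0) := by
    have := hsum.tendsto_atTop_zero.norm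
    simpa [Complex.norm_eq_abs, abs_of_pos hρ0, map_mul, ← Complex.ofReal_pow] using this
  obtain ⟨C, hC⟩ := htend.bddAbove_range
  apply Summable.of_nonneg_of_le (fun m => by positivity)
    (f := fun m => C * (r / ρ) ^ m)
  · intro m
    have h1 : Complex.abs (c m) * ρ ^ m ≤ C := hC ⟨m, rfl⟩
    have hρm : (0:ℝ) < ρ ^ m := by positivity
    have h2 : Complex.abs (c m) * r ^ m = (Complex.abs (c m) * ρ ^ m) * (r / ρ) ^ m := by
      rw [div_pow, mul_assoc, mul_comm (ρ ^ m), div_mul_cancel₀ _ hρm.ne']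
    rw [h2]
    exact mul_le_mul_of_nonneg_right h1 (by positivity)
  · apply Summable.mul_left
    apply summable_geometric_of_lt_one (by positivity)
    rw [div_lt_one hρ0]; exact hrρ

lemma hasFPS {g : ℂ → ℂ} {c : ℕ → ℂ}
    (h : ∀ w ∈ Metric.ball (0:ℂ) 1, HasSum (fun m => c m * w ^ m) (g w)) :
    HasFPowerSeriesOnBall g (FormalMultilinearSeries.ofScalars ℂ c) 0 1 := by
  constructor
  · refine ENNReal.le_of_forall_nnreal_lt fun t ht => ?_
    apply FormalMultilinearSeries.le_radius_of_summable
    have ht1 : (t : ℝ) < 1 := by exact_mod_cast ht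
    have := summable_norm (fun w hw => (h w hw).summable) t.coe_nonneg ht1
    simpa only [FormalMultilinearSeries.ofScalars_norm, Complex.norm_eq_abs] using this
  · exact one_pos
  · intro y hy
    rw [mem_emetric_ball_zero_iff] at hy
    have hy' : y ∈ Metric.ball (0:ℂ) 1 := by
      rw [mem_ball_zero_iff]; exact_mod_cast (show ‖y‖₊ < 1 by rw [← ENNReal.coe_one, enorm_lt_coe] at hy; exact hy)
    have := h y hy'
    simp only [FormalMultilinearSeries.ofScalars_apply_eq, zero_add, smul_eq_mul]
    exact this

lemma g_zero {g : ℂ → ℂ} {c : ℕ → ℂ}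
    (h : ∀ w ∈ Metric.ball (0:ℂ) 1, HasSum (fun m => c m * w ^ m) (g w)) :
    g 0 = c 0 := by
  have h0 := h 0 (by simp)
  have : HasSum (fun m => c m * (0:ℂ) ^ m) (c 0) := by
    convert hasSum_single (f := fun m => c m * (0:ℂ) ^ m) 0 (fun m hm => by
      simp [zero_pow hm]) using 1
    simp
  exact h0.unique this

lemma deriv_zero {g : ℂ → ℂ} {c : ℕ → ℂ}
    (h : ∀ w ∈ Metric.ball (0:ℂ) 1, HasSum (fun m => c m * w ^ m) (g w)) :
    HasDerivAt g (c 1) 0 := by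
  have := (hasFPS h).hasFPowerSeriesAt.hasDerivAt
  have e : (FormalMultilinearSeries.ofScalars ℂ c 1 fun _ => (1:ℂ)) = c 1 := by
    rw [FormalMultilinearSeries.ofScalars_apply_eq]; simp
  rwa [e] at this

lemma diffOn {g : ℂ → ℂ} {c : ℕ → ℂ}
    (h : ∀ w ∈ Metric.ball (0:ℂ) 1, HasSum (fun m => c m * w ^ m) (g w)) :
    DifferentiableOn ℂ g (Metric.ball (0:ℂ) 1) := by
  apply (hasFPS h).differentiableOn.mono
  intro x hx
  rw [mem_emetric_ball_zero_iff]
  rw [mem_ball_zero_iff] at hx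
  rw [← ENNReal.coe_one, enorm_lt_coe]
  exact_mod_cast hx

lemma normSq_identity (c u : ℂ) :
    Complex.normSq (1 - (starRingEnd ℂ) c * u) - Complex.normSq (u - c)
      = (1 - Complex.normSq c) * (1 - Complex.normSq u) := by
  simp only [Complex.normSq_apply, Complex.sub_re, Complex.sub_im, Complex.mul_re,
    Complex.mul_im, Complex.one_re, Complex.one_im, Complex.conj_re, Complex.conj_im]
  ring

lemma denom_ne (c u : ℂ) (hc : Complex.abs c < 1) (hu : Complex.abs u < 1) :
    1 - (starRingEnd ℂ) c * u ≠ 0 := by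
  intro h
  have h1 : Complex.abs ((starRingEnd ℂ) c * u) < 1 := by
    rw [map_mul, Complex.abs_conj]
    calc Complex.abs c * Complex.abs u ≤ Complex.abs c * 1 :=
          mul_le_mul_of_nonneg_left hu.le (Complex.abs.nonneg c)
      _ < 1 := by simpa using hc
  have : (starRingEnd ℂ) c * u = 1 := by linear_combination -h
  rw [this] at h1; simp at h1

lemma mobius_lt_one {c u : ℂ} (hc : Complex.abs c < 1) (hu : Complex.abs u < 1) :
    Complex.abs ((u - c) / (1 - (starRingEnd ℂ) c * u)) < 1 := by
  rw [map_div₀, div_lt_one]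
  · have key := normSq_identity c u
    have h1 : Complex.normSq c < 1 := by
      rw [← Complex.sq_abs]; nlinarith [Complex.abs.nonneg c]
    have h2 : Complex.normSq u < 1 := by
      rw [← Complex.sq_abs]; nlinarith [Complex.abs.nonneg u]
    have h3 : Complex.normSq (u - c) < Complex.normSq (1 - (starRingEnd ℂ) c * u) := by
      nlinarith
    have := Real.sqrt_lt_sqrt (Complex.normSq_nonneg _) h3
    simpa [Complex.abs_apply] using this
  · have := denom_ne c u hc hu
    simpa [Complex.abs.pos_iff] using this

section Gprops

variable {g : ℂ → ℂ} {c : ℕ → ℂ}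
  (hdg : DifferentiableOn ℂ g (Metric.ball (0:ℂ) 1))
  (hb : ∀ w ∈ Metric.ball (0:ℂ) 1, Complex.abs (g w) < 1)
  (hg0 : g 0 = c 0)

-- The Möbius-composed map
noncomputable def G (g : ℂ → ℂ) (c0 : ℂ) : ℂ → ℂ :=
  fun w => (g w - c0) / (1 - (starRingEnd ℂ) c0 * g w)

lemma hc0_lt (hb : ∀ w ∈ Metric.ball (0:ℂ) 1, Complex.abs (g w) < 1) (hg0 : g 0 = c 0) :
    Complex.abs (c 0) < 1 := by
  rw [← hg0]; exact hb 0 (by simp)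

include hb hg0 in
lemma G_diff (hdg : DifferentiableOn ℂ g (Metric.ball (0:ℂ) 1)) :
    DifferentiableOn ℂ (G g (c 0)) (Metric.ball (0:ℂ) 1) := by
  apply DifferentiableOn.div
  · exact hdg.sub_const _
  · exact (differentiableOn_const _).sub ((differentiableOn_const _).mul hdg)
  · intro w hw
    exact denom_ne _ _ (hc0_lt hb hg0) (hb w hw)

include hb hg0 in
lemma G_maps : MapsTo (G g (c 0)) (Metric.ball (0:ℂ) 1) (Metric.ball (0:ℂ) 1) := by
  intro w hw
  rw [mem_ball_zero_iff]
  exact_mod_cast mobius_lt_one (hc0_lt hb hg0) (hb w hw)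

lemma G_zero (hg0 : g 0 = c 0) : G g (c 0) 0 = 0 := by
  simp [G, hg0]

end Gprops

lemma coeff_one_bound {g : ℂ → ℂ} {c : ℕ → ℂ}
    (hdg : DifferentiableOn ℂ g (Metric.ball (0:ℂ) 1))
    (hd1 : HasDerivAt g (c 1) 0)
    (hb : ∀ w ∈ Metric.ball (0:ℂ) 1, Complex.abs (g w) < 1)
    (hg0 : g 0 = c 0) :
    Complex.abs (c 1) ≤ 1 - Complex.abs (c 0) ^ 2 := by
  have hc0 : Complex.abs (c 0) < 1 := hc0_lt hb hg0
  have hne : (1 : ℂ) - (starRingEnd ℂ) (c 0) * g 0 ≠ 0 := by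
    rw [hg0]; exact denom_ne _ _ hc0 (by rw [← hg0]; exact hb 0 (by simp))
  -- derivative of G at 0
  have hDG : HasDerivAt (G g (c 0))
      ((c 1 * (1 - (starRingEnd ℂ) (c 0) * g 0) - (g 0 - c 0) * (-((starRingEnd ℂ) (c 0) * c 1)))
        / (1 - (starRingEnd ℂ) (c 0) * g 0) ^ 2) 0 := by
    exact (hd1.sub_const (c 0)).div ((hd1.const_mul ((starRingEnd ℂ) (c 0))).const_sub 1) hne
  have hne' : (1 : ℂ) - (starRingEnd ℂ) (c 0) * c 0 ≠ 0 := by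
    have h := hne; rwa [hg0] at h
  have hval : deriv (G g (c 0)) 0 = c 1 / (1 - (starRingEnd ℂ) (c 0) * c 0) := by
    rw [hDG.deriv, hg0, sub_self, zero_mul, sub_zero, pow_two, mul_div_assoc,
      div_mul_cancel_left₀ hne', div_eq_mul_inv]
  have hschwarz : Complex.abs (deriv (G g (c 0)) 0) ≤ 1 / 1 := Complex.norm_deriv_le_div_of_mapsTo_ball
      (G_diff hb hg0 hdg) (by rw [G_zero hg0]; exact (G_maps hb hg0).mono_right ball_subset_closedBall) one_pos
  rw [hval] at hschwarz
  have hconj : (1 : ℂ) - (starRingEnd ℂ) (c 0) * c 0 = ((1 - Complex.normSq (c 0) : ℝ) : ℂ) := by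
    rw [← Complex.normSq_eq_conj_mul_self]
    push_cast
    ring
  have hpos : (0:ℝ) < 1 - Complex.normSq (c 0) := by
    rw [← Complex.sq_abs]; nlinarith [Complex.abs.nonneg (c 0)]
  rw [hconj, map_div₀, Complex.abs_ofReal, abs_of_pos hpos, div_one, div_le_one hpos] at hschwarz
  rw [Complex.sq_abs]
  linarith

lemma point_bound {g : ℂ → ℂ} {c : ℕ → ℂ}
    (hdg : DifferentiableOn ℂ g (Metric.ball (0:ℂ) 1))
    (hb : ∀ w ∈ Metric.ball (0:ℂ) 1, Complex.abs (g w) < 1)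
    (hg0 : g 0 = c 0)
    (w : ℂ) (hw : w ∈ Metric.ball (0:ℂ) 1) :
    Complex.abs (g w) * (1 + Complex.abs (c 0) * Complex.abs w)
      ≤ Complex.abs (c 0) + Complex.abs w := by
  have hc0 : Complex.abs (c 0) < 1 := hc0_lt hb hg0
  have hsch := Complex.dist_le_div_mul_dist_of_mapsTo_ball
      (G_diff hb hg0 hdg) (by rw [G_zero hg0]; exact (G_maps hb hg0).mono_right ball_subset_closedBall) hw
  rw [G_zero hg0, dist_zero_right, dist_zero_right, one_div_one, one_mul] at hsch
  -- hsch : ‖G g (c 0) w‖ ≤ ‖w‖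
  set u := g w with hu
  set α := Complex.abs (c 0) with hα
  set r := Complex.abs w with hrdef
  set t := Complex.abs u with ht
  have hupos := hb w hw
  have ht1 : t < 1 := hupos
  have ht0 : 0 ≤ t := Complex.abs.nonneg u
  have hα0 : 0 ≤ α := Complex.abs.nonneg (c 0)
  have hr0 : 0 ≤ r := Complex.abs.nonneg w
  have hr1 : r < 1 := by
    have := mem_ball_zero_iff.mp hw
    rwa [Complex.norm_eq_abs] at this
  have hdenom : Complex.abs (1 - (starRingEnd ℂ) (c 0) * u) ≠ 0 := by
    simpa [Complex.abs.ne_zero_iff] using denom_ne (c 0) u hc0 hupos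
  have habs : Complex.abs (u - c 0) ≤ r * Complex.abs (1 - (starRingEnd ℂ) (c 0) * u) := by
    have : Complex.abs ((u - c 0) / (1 - (starRingEnd ℂ) (c 0) * u)) ≤ r := by
      simpa [G, Complex.norm_eq_abs] using hsch
    rwa [map_div₀, div_le_iff₀ (lt_of_le_of_ne (Complex.abs.nonneg _) (Ne.symm hdenom))] at this
  set x := ((starRingEnd ℂ) (c 0) * u).re with hx
  have hxle : x ≤ α * t := by
    calc x ≤ Complex.abs ((starRingEnd ℂ) (c 0) * u) := Complex.re_le_abs _
      _ = α * t := by rw [map_mul, Complex.abs_conj]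
  have e1 : Complex.normSq (u - c 0) = t^2 - 2*x + α^2 := by
    have hre : (u * (starRingEnd ℂ) (c 0)).re = x := by rw [mul_comm]
    rw [Complex.normSq_sub, hre, ← Complex.sq_abs u, ← Complex.sq_abs (c 0)]
    ring
  have e2 : Complex.normSq (1 - (starRingEnd ℂ) (c 0) * u) = 1 - 2*x + α^2 * t^2 := by
    have hre : ((1:ℂ) * (starRingEnd ℂ) ((starRingEnd ℂ) (c 0) * u)).re = x := by
      rw [one_mul, Complex.conj_re]
    rw [Complex.normSq_sub, hre, Complex.normSq_mul, Complex.normSq_conj, Complex.normSq_one,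
      ← Complex.sq_abs u, ← Complex.sq_abs (c 0)]
    ring
  have key : t^2 - 2*x + α^2 ≤ r^2 * (1 - 2*x + α^2*t^2) := by
    have hsq := mul_self_le_mul_self (Complex.abs.nonneg (u - c 0)) habs
    rw [Complex.mul_self_abs] at hsq
    have hrw : r * Complex.abs (1 - (starRingEnd ℂ) (c 0) * u)
        * (r * Complex.abs (1 - (starRingEnd ℂ) (c 0) * u))
        = r^2 * (Complex.abs (1 - (starRingEnd ℂ) (c 0) * u)
            * Complex.abs (1 - (starRingEnd ℂ) (c 0) * u)) := by ring
    rw [hrw, Complex.mul_self_abs, e1, e2] at hsq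
    exact hsq
  -- goal : t * (1 + α * r) ≤ α + r
  by_contra hcon
  push_neg at hcon
  have hP : 0 < t * (1 + α*r) - (α + r) := by linarith
  have hPQ : (t * (1 + α*r) - (α + r)) * (t * (1 - α*r) - (α - r)) ≤ 0 := by
    nlinarith [mul_nonneg (sub_nonneg.2 hxle) (by nlinarith : (0:ℝ) ≤ 1 - r^2)]
  have hdiff : (t * (1 + α*r) - (α + r)) - (t * (1 - α*r) - (α - r)) = 2*r*(α*t - 1) := by ring
  have hαt : α * t < 1 := by nlinarith
  have h2r : 2*r*(α*t - 1) ≤ 0 := mul_nonpos_of_nonneg_of_nonpos (by linarith) (by linarith)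
  have hQ : 0 < t * (1 - α*r) - (α - r) := by linarith
  nlinarith [mul_pos hP hQ]

lemma exists_root {w : ℂ} (hw : Complex.abs w < 1) {n : ℕ} (hn : 0 < n) :
    ∃ z : ℂ, z ^ n = w ∧ Complex.abs z < 1 := by
  by_cases hw0 : w = 0
  · exact ⟨0, by rw [hw0, zero_pow hn.ne'], by simp⟩
  · refine ⟨w ^ ((n : ℂ)⁻¹), Complex.cpow_nat_inv_pow w hn.ne', ?_⟩
    by_contra hge
    push_neg at hge
    have h1 : (1:ℝ) ≤ Complex.abs (w ^ ((n : ℂ)⁻¹)) ^ n := one_le_pow₀ hge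
    rw [← map_pow, Complex.cpow_nat_inv_pow w hn.ne'] at h1
    linarith

lemma avg {f : ℂ → ℂ} {a : ℕ → ℂ}
    (hf : ∀ z ∈ Metric.ball (0:ℂ) 1, HasSum (fun k : ℕ => a k * z ^ k) (f z))
    (hb : ∀ z ∈ Metric.ball (0:ℂ) 1, Complex.abs (f z) < 1)
    {n : ℕ} (hn : 0 < n) (w : ℂ) (hw : w ∈ Metric.ball (0:ℂ) 1) :
    HasSum (fun m => a (n * m) * w ^ m) (∑' m, a (n * m) * w ^ m) ∧
      Complex.abs (∑' m, a (n * m) * w ^ m) < 1 := by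
  rw [mem_ball_zero_iff] at hw
  rw [Complex.norm_eq_abs] at hw
  obtain ⟨z, hzn, hz1⟩ := exists_root hw hn
  have hzmem : z ∈ Metric.ball (0:ℂ) 1 := by rwa [mem_ball_zero_iff, Complex.norm_eq_abs]
  have hinj : Function.Injective (fun m : ℕ => n * m) :=
    fun m1 m2 h => by simpa [Nat.mul_left_cancel_iff hn] using h
  have hpow : ∀ m : ℕ, z ^ (n * m) = w ^ m := by
    intro m; rw [pow_mul, hzn]
  -- summability
  have hsum0 : Summable (fun m : ℕ => a (n * m) * z ^ (n * m)) :=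
    (hf z hzmem).summable.comp_injective hinj
  have hsum : Summable (fun m : ℕ => a (n * m) * w ^ m) := by
    convert hsum0 using 2 with m
    rw [hpow]
  have hS : HasSum (fun m => a (n * m) * w ^ m) (∑' m, a (n * m) * w ^ m) := hsum.hasSum
  refine ⟨hS, ?_⟩
  -- roots of unity
  set ω : ℂ := Complex.exp (2 * Real.pi * Complex.I / n) with hωdef
  have hω : IsPrimitiveRoot ω n := Complex.isPrimitiveRoot_exp n hn.ne'
  have hωabs : Complex.abs ω = 1 := by
    have h1 : Complex.abs ω ^ n = 1 := by rw [← map_pow, hω.pow_eq_one]; simp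
    have h0 : (0:ℝ) ≤ Complex.abs ω := Complex.abs.nonneg ω
    rcases (pow_eq_one_iff_cases).mp h1 with h | h | h
    · omega
    · exact h
    · nlinarith [h.1]
  have hmem : ∀ j : ℕ, ω ^ j * z ∈ Metric.ball (0:ℂ) 1 := by
    intro j
    rw [mem_ball_zero_iff, Complex.norm_eq_abs, map_mul, map_pow, hωabs, one_pow, one_mul]
    exact hz1
  have H1 : HasSum (fun i : ℕ => ∑ j ∈ Finset.range n, a i * (ω ^ j * z) ^ i)
      (∑ j ∈ Finset.range n, f (ω ^ j * z)) :=
    hasSum_sum fun j _ => hf _ (hmem j)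
  have hgeom : ∀ i : ℕ, (∑ j ∈ Finset.range n, (ω ^ i) ^ j)
      = if n ∣ i then (n : ℂ) else 0 := by
    intro i
    by_cases hdvd : n ∣ i
    · rw [if_pos hdvd]
      have h1 : ω ^ i = 1 := (hω.pow_eq_one_iff_dvd i).mpr hdvd
      simp [h1]
    · rw [if_neg hdvd]
      have hne1 : ω ^ i ≠ 1 := fun h => hdvd ((hω.pow_eq_one_iff_dvd i).mp h)
      rw [geom_sum_eq hne1]
      have : (ω ^ i) ^ n = 1 := by
        rw [← pow_mul, mul_comm, pow_mul, hω.pow_eq_one, one_pow]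
      rw [this, sub_self, zero_div]
  have H2 : HasSum (fun i : ℕ => (if n ∣ i then (n : ℂ) else 0) * (a i * z ^ i))
      (∑ j ∈ Finset.range n, f (ω ^ j * z)) := by
    convert H1 using 2 with i
    rw [← hgeom i, Finset.sum_mul]
    refine Finset.sum_congr rfl fun j _ => ?_
    rw [mul_pow, ← pow_mul, ← pow_mul, mul_comm i j]
    ring
  have hzero : ∀ x : ℕ, x ∉ Set.range (fun m : ℕ => n * m) →
      (if n ∣ x then (n : ℂ) else 0) * (a x * z ^ x) = 0 := by
    intro x hx
    have : ¬ n ∣ x := by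
      intro ⟨m, hm⟩
      exact hx ⟨m, hm.symm⟩
    rw [if_neg this, zero_mul]
  have H3 : HasSum (fun m : ℕ => (n : ℂ) * (a (n * m) * w ^ m))
      (∑ j ∈ Finset.range n, f (ω ^ j * z)) := by
    have h := (hinj.hasSum_iff hzero).mpr H2
    convert h using 2 with m
    simp only [Function.comp_apply]
    rw [if_pos (dvd_mul_right n m), hpow m]
  have H4 : HasSum (fun m : ℕ => (n : ℂ) * (a (n * m) * w ^ m))
      ((n : ℂ) * ∑' m, a (n * m) * w ^ m) := hS.mul_left _
  have heq : (n : ℂ) * ∑' m, a (n * m) * w ^ m = ∑ j ∈ Finset.range n, f (ω ^ j * z) :=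
    H4.unique H3
  have habs : (n : ℝ) * Complex.abs (∑' m, a (n * m) * w ^ m) < n := by
    calc (n:ℝ) * Complex.abs (∑' m, a (n * m) * w ^ m)
        = Complex.abs ((n : ℂ) * ∑' m, a (n * m) * w ^ m) := by
          rw [map_mul, Complex.abs_natCast]
      _ = Complex.abs (∑ j ∈ Finset.range n, f (ω ^ j * z)) := by rw [heq]
      _ ≤ ∑ j ∈ Finset.range n, Complex.abs (f (ω ^ j * z)) := by
          simpa [Complex.norm_eq_abs] using
            norm_sum_le (Finset.range n) (fun j => f (ω ^ j * z))
      _ < ∑ j ∈ Finset.range n, 1 :=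
          Finset.sum_lt_sum_of_nonempty (Finset.nonempty_range_iff.mpr hn.ne') fun j _ => hb _ (hmem j)
      _ = n := by simp
  have hnpos : (0:ℝ) < n := by exact_mod_cast hn
  nlinarith [habs]

lemma coeff_bound_all {f : ℂ → ℂ} {a : ℕ → ℂ}
    (hf : ∀ z ∈ Metric.ball (0:ℂ) 1, HasSum (fun k : ℕ => a k * z ^ k) (f z))
    (hb : ∀ z ∈ Metric.ball (0:ℂ) 1, Complex.abs (f z) < 1)
    (n : ℕ) (hn : 0 < n) :
    Complex.abs (a n) ≤ 1 - Complex.abs (a 0) ^ 2 := by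
  set c : ℕ → ℂ := fun m => a (n * m) with hc
  set g : ℂ → ℂ := fun w => ∑' m, a (n * m) * w ^ m with hgdef
  have h : ∀ w ∈ Metric.ball (0:ℂ) 1, HasSum (fun m => c m * w ^ m) (g w) :=
    fun w hw => (avg hf hb hn w hw).1
  have hbg : ∀ w ∈ Metric.ball (0:ℂ) 1, Complex.abs (g w) < 1 :=
    fun w hw => (avg hf hb hn w hw).2
  have := coeff_one_bound (diffOn h) (deriv_zero h) hbg (g_zero h)
  simpa [hc] using this

theorem main
    (f : ℂ → ℂ) (a : ℕ → ℂ)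
    (hf : ∀ z ∈ Metric.ball (0 : ℂ) 1, HasSum (fun k : ℕ => a k * z ^ k) (f z))
    (hb : ∀ z ∈ Metric.ball (0 : ℂ) 1, Complex.abs (f z) < 1)
    (p lam : ℝ) (hp0 : 0 < p) (hp1 : p ≤ 1) (hlam : 0 < lam)
    (R : ℝ)
    (hR : R = if p = 2 * lam then 1 / 3
              else (-p - lam + Real.sqrt (lam ^ 2 + 4 * p * lam)) / (2 * lam - p))
    (z : ℂ) (hz : z ∈ Metric.ball (0 : ℂ) 1)
    (r : ℝ) (hr : r = Complex.abs z) (hrR : r ≤ R) :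
    Complex.abs (f z) ^ p + lam * ∑' k : ℕ, Complex.abs (a (k + 1)) * r ^ (k + 1) ≤ 1 := by
  have hr0 : 0 ≤ r := hr ▸ Complex.abs.nonneg z
  have hr1 : r < 1 := by
    have := mem_ball_zero_iff.mp hz
    rw [Complex.norm_eq_abs] at this; rw [hr]; exact this
  set α : ℝ := Complex.abs (a 0) with hαdef
  have hf0 : f 0 = a 0 := g_zero hf
  have hα1 : α < 1 := by rw [hαdef, ← hf0]; exact hb 0 (by simp)
  have hα0 : 0 ≤ α := Complex.abs.nonneg _
  set A : ℝ := Complex.abs (f z) with hAdef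
  have hA1 : A < 1 := hb z hz
  have hA0 : 0 ≤ A := Complex.abs.nonneg _
  -- coefficient bounds
  have hcoef : ∀ k : ℕ, Complex.abs (a (k + 1)) ≤ 1 - α ^ 2 := fun k =>
    coeff_bound_all hf hb (k + 1) k.succ_pos
  have h1α : (0:ℝ) ≤ 1 - α ^ 2 := by nlinarith
  -- sum bound
  have hgeo : Summable (fun k : ℕ => (1 - α ^ 2) * r * r ^ k) :=
    (summable_geometric_of_lt_one hr0 hr1).mul_left _
  have hmaj : ∀ k : ℕ, Complex.abs (a (k + 1)) * r ^ (k + 1) ≤ (1 - α ^ 2) * r * r ^ k := by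
    intro k
    have h2 : (1 - α ^ 2) * r * r ^ k = (1 - α ^ 2) * r ^ (k + 1) := by
      rw [pow_succ]; ring
    rw [h2]
    exact mul_le_mul_of_nonneg_right (hcoef k) (by positivity)
  have hsummable : Summable (fun k : ℕ => Complex.abs (a (k + 1)) * r ^ (k + 1)) :=
    Summable.of_nonneg_of_le (fun k => by positivity) hmaj hgeo
  set S : ℝ := ∑' k : ℕ, Complex.abs (a (k + 1)) * r ^ (k + 1) with hSdef
  have hS0 : 0 ≤ S := tsum_nonneg fun k => by positivity
  have hSle : S ≤ (1 - α ^ 2) * r * (1 - r)⁻¹ := by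
    calc S ≤ ∑' k : ℕ, (1 - α ^ 2) * r * r ^ k := Summable.tsum_le_tsum hmaj hsummable hgeo
      _ = (1 - α ^ 2) * r * ∑' k : ℕ, r ^ k := tsum_mul_left
      _ = (1 - α ^ 2) * r * (1 - r)⁻¹ := by rw [tsum_geometric_of_lt_one hr0 hr1]
  have hrpos : (0:ℝ) < 1 - r := by linarith
  have hSle' : S * (1 - r) ≤ (1 - α ^ 2) * r := by
    have := mul_le_mul_of_nonneg_right hSle hrpos.le
    rwa [mul_assoc, inv_mul_cancel₀ hrpos.ne', mul_one] at this
  -- pointwise Schwarz-Pick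
  have hA : A * (1 + α * r) ≤ α + r := by
    have := point_bound (c := a) (diffOn hf) hb hf0 z hz
    rwa [← hr, ← hαdef, ← hAdef] at this
  -- Bernoulli via weighted AM-GM
  have hBer : A ^ p ≤ p * A + (1 - p) := by
    have := Real.geom_mean_le_arith_mean2_weighted hp0.le (by linarith : (0:ℝ) ≤ 1 - p)
      hA0 zero_le_one (by ring)
    simpa using this
  -- the quadratic inequality 2λr(1+r) ≤ p(1-r)²
  have hkey : 2 * lam * r * (1 + r) ≤ p * (1 - r) ^ 2 := by
    by_cases hpl : p = 2 * lam
    · rw [hpl, if_pos rfl] at hR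
      rw [hpl]
      have : r ≤ 1 / 3 := hR ▸ hrR
      nlinarith
    · rw [if_neg hpl] at hR
      set s : ℝ := Real.sqrt (lam ^ 2 + 4 * p * lam) with hsdef
      have hs0 : 0 ≤ s := Real.sqrt_nonneg _
      have hs2 : s ^ 2 = lam ^ 2 + 4 * p * lam := Real.sq_sqrt (by positivity)
      have hq : 2 * lam - p ≠ 0 := fun h => hpl (by linarith)
      have hqR : (2 * lam - p) * R = -p - lam + s := by
        rw [hR]; field_simp
      have hFR : (2 * lam - p) * R ^ 2 + 2 * (lam + p) * R - p = 0 := by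
        have h1 : ((2 * lam - p) * R ^ 2 + 2 * (lam + p) * R - p) * (2 * lam - p) = 0 := by
          linear_combination ((2 * lam - p) * R + (-p - lam + s) + 2 * (lam + p)) * hqR + hs2
        rcases mul_eq_zero.mp h1 with h | h
        · exact h
        · exact absurd h hq
      have hR1 : R < 1 := by
        rcases lt_or_gt_of_ne hq with hqneg | hqpos
        · -- 2λ - p < 0, so p > 2λ, s > 3λ
          have hs3 : 3 * lam < s := by nlinarith
          by_contra hcon
          push_neg at hcon
          have : (2 * lam - p) * R ≤ (2 * lam - p) * 1 := by nlinarith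
          rw [hqR] at this
          linarith
        · -- 2λ - p > 0, so p < 2λ, s < 3λ
          have hs3 : s < 3 * lam := by nlinarith
          by_contra hcon
          push_neg at hcon
          have : (2 * lam - p) * 1 ≤ (2 * lam - p) * R := by nlinarith
          rw [hqR] at this
          linarith
      have hFr : (2 * lam - p) * r ^ 2 + 2 * (lam + p) * r - p ≤ 0 := by
        rcases le_or_gt 0 (2 * lam - p) with hqpos | hqneg
        · nlinarith [mul_nonneg (sub_nonneg.2 hrR)
            (show (0:ℝ) ≤ (2 * lam - p) * (R + r) + 2 * (lam + p) by
              have hR0 : 0 ≤ R := le_trans hr0 hrR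
              nlinarith)]
        · nlinarith [mul_nonneg (sub_nonneg.2 hrR)
            (show (0:ℝ) ≤ (2 * lam - p) * (R + r) + 2 * (lam + p) by nlinarith)]
      nlinarith [hFr]
  -- combine
  have hD : (0:ℝ) < (1 - r) * (1 + α * r) := mul_pos hrpos (by positivity)
  have step_b : lam * ((1 - α ^ 2) * r) * (1 + α * r) ≤ p * (1 - α) * (1 - r) ^ 2 := by
    have hh1 := mul_le_mul_of_nonneg_left hkey (sub_nonneg.2 hα1.le)
    have hh2 : (0:ℝ) ≤ lam * r * ((1 - α) ^ 2 * (1 + r * (2 + α))) := by positivity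
    nlinarith [hh1, hh2]
  have step_c : p * (1 - α) * (1 - r) ^ 2 ≤ p * (1 - A) * ((1 - r) * (1 + α * r)) := by
    have h1 : (1 - α) * (1 - r) ≤ (1 - A) * (1 + α * r) := by nlinarith
    nlinarith [mul_le_mul_of_nonneg_left h1 (mul_nonneg hp0.le hrpos.le)]
  have hfinal : lam * S ≤ p * (1 - A) := by
    have hchain : lam * S * ((1 - r) * (1 + α * r)) ≤ p * (1 - A) * ((1 - r) * (1 + α * r)) := by
      calc lam * S * ((1 - r) * (1 + α * r)) = lam * (S * (1 - r)) * (1 + α * r) := by ring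
        _ ≤ lam * ((1 - α ^ 2) * r) * (1 + α * r) := by
            apply mul_le_mul_of_nonneg_right _ (by nlinarith)
            exact mul_le_mul_of_nonneg_left hSle' hlam.le
        _ ≤ p * (1 - α) * (1 - r) ^ 2 := step_b
        _ ≤ p * (1 - A) * ((1 - r) * (1 + α * r)) := step_c
    exact le_of_mul_le_mul_right hchain hD
  linarith [hBer, hfinal]

end BohrAux

/-- Bohr-type inequality with two parameters, case 0 < p ≤ 1, 0 < λ:
if f is analytic on the unit disk with |f| < 1 and Taylor coefficients aₖ,
then |f(z)|^p + λ ∑_{k≥1} |aₖ| r^k ≤ 1 for r = |z| ≤ R_{λ,p}. -/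
theorem bohr_two_params_case1
    (f : ℂ → ℂ) (a : ℕ → ℂ)
    (hf : ∀ z ∈ Metric.ball (0 : ℂ) 1, HasSum (fun k : ℕ => a k * z ^ k) (f z))
    (hb : ∀ z ∈ Metric.ball (0 : ℂ) 1, ‖f z‖ < 1)
    (p lam : ℝ) (hp0 : 0 < p) (hp1 : p ≤ 1) (hlam : 0 < lam)
    (R : ℝ)
    (hR : R = if p = 2 * lam then 1 / 3
              else (-p - lam + Real.sqrt (lam ^ 2 + 4 * p * lam)) / (2 * lam - p))
    (z : ℂ) (hz : z ∈ Metric.ball (0 : ℂ) 1)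
    (r : ℝ) (hr : r = ‖z‖) (hrR : r ≤ R) :
    ‖f z‖ ^ p + lam * ∑' k : ℕ, ‖a (k + 1)‖ * r ^ (k + 1) ≤ 1 := by
  exact BohrAux.main f a hf hb p lam hp0 hp1 hlam R hR z hz r hr hrR
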